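/- Let v₈ > 0 and let a, b be non-negative integers not both zero. Suppose K₁, K₂ are links with equal crossing numbers c(K₁) = c(K₂) = c > 0, with determinant density d₁ := 2π·log(det K₁)/c < ((a+b)/a)·(ε/2) (when a > 0) and |2π·log(det K₂)/c − v₈| < ((a+b)/b)·(ε/2) (when b > 0). If K satisfies det(K) = (det K₁)^a·(det K₂)^b and c(K) = a·c + b·c, then |2π·log(det K)/c(K) − (b/(a+b))·v₈| < ε. -/

import Mathlib

theorem det_density_conway_sum (v₈ : ℝ) (hv : 0 < v₈) (a b : ℕ) (hab : 0 < a + b)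
    (ε : ℝ) (hε : 0 < ε) (D₁ D₂ D c : ℕ) (hD₁ : 0 < D₁) (hD₂ : 0 < D₂) (hc : 0 < c)
    (h₁ : 0 < a → 2 * Real.pi * Real.log D₁ / c < ((a + b : ℝ) / a) * (ε / 2))
    (h₂ : 0 < b → |2 * Real.pi * Real.log D₂ / c - v₈| < ((a + b : ℝ) / b) * (ε / 2))
    (hD : D = D₁ ^ a * D₂ ^ b) :
    |2 * Real.pi * Real.log D / (a * c + b * c) - ((b : ℝ) / (a + b)) * v₈| < ε := by
  have hcR : (0:ℝ) < c := by exact_mod_cast hc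
  have habR : (0:ℝ) < (a:ℝ) + b := by exact_mod_cast hab
  set x : ℝ := 2 * Real.pi * Real.log D₁ / c with hxdef
  set y : ℝ := 2 * Real.pi * Real.log D₂ / c with hydef
  have hx0 : 0 ≤ x := by
    apply div_nonneg _ hcR.le
    have : (0:ℝ) ≤ Real.log D₁ := Real.log_nonneg (by exact_mod_cast hD₁)
    positivity
  have key : 2 * Real.pi * Real.log D / ((a:ℝ) * c + b * c)
      = ((a:ℝ) * x + b * (y - v₈)) / ((a:ℝ) + b) + ((b:ℝ) / (a + b)) * v₈ := by
    subst hD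
    push_cast
    rw [Real.log_mul (by positivity) (by positivity), Real.log_pow, Real.log_pow]
    rw [hxdef, hydef]
    have hne : (a:ℝ) * c + b * c ≠ 0 := by
      have h' : (a:ℝ) * c + b * c = ((a:ℝ) + b) * c := by ring
      rw [h']; positivity
    field_simp
    ring
  rw [key, add_sub_cancel_right]
  have hA : (a:ℝ) * x < ((a:ℝ) + b) * (ε / 2) := by
    rcases Nat.eq_zero_or_pos a with ha | ha
    · have hb : 0 < b := by omega
      have hbR : (0:ℝ) < b := by exact_mod_cast hb
      simp only [ha, Nat.cast_zero, zero_mul, zero_add]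
      positivity
    · have haR : (0:ℝ) < a := by exact_mod_cast ha
      have := mul_lt_mul_of_pos_left (h₁ ha) haR
      calc (a:ℝ) * x < (a:ℝ) * (((a:ℝ) + b) / a * (ε / 2)) := this
        _ = ((a:ℝ) + b) * (ε / 2) := by field_simp
  have hB : (b:ℝ) * |y - v₈| < ((a:ℝ) + b) * (ε / 2) := by
    rcases Nat.eq_zero_or_pos b with hb | hb
    · have ha : 0 < a := by omega
      have haR : (0:ℝ) < a := by exact_mod_cast ha
      simp only [hb, Nat.cast_zero, zero_mul, add_zero]
      positivity
    · have hbR : (0:ℝ) < b := by exact_mod_cast hb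
      have := mul_lt_mul_of_pos_left (h₂ hb) hbR
      calc (b:ℝ) * |y - v₈| < (b:ℝ) * (((a:ℝ) + b) / b * (ε / 2)) := this
        _ = ((a:ℝ) + b) * (ε / 2) := by field_simp
  rw [abs_div, abs_of_pos habR, div_lt_iff₀ habR]
  calc |(a:ℝ) * x + b * (y - v₈)| ≤ |(a:ℝ) * x| + |(b:ℝ) * (y - v₈)| := abs_add_le _ _
    _ = (a:ℝ) * x + (b:ℝ) * |y - v₈| := by
        rw [abs_of_nonneg (by positivity), abs_mul, abs_of_nonneg (by positivity : (0:ℝ) ≤ (b:ℝ))]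
    _ < ((a:ℝ) + b) * (ε / 2) + ((a:ℝ) + b) * (ε / 2) := add_lt_add hA hB
    _ = ε * ((a:ℝ) + b) := by ring
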